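/- Let R be a commutative ℚ-algebra, (I_k)_{k≥1} an increasing family of ℚ-subspaces of R (I_k ⊆ I_{k+1}) satisfying I_k · I_ℓ ⊆ I_{k+ℓ}. Let c_1, c_2, c_3, … and ch_1, ch_2, … be elements of R such that: (i) ch_m ∈ I_1 for all m ≥ 1; (ii) c_1 = ch_1; (iii) for every k and every γ ∈ I_k, γ·c_1 ∈ I_k; (iv) for each m ≥ 2, c_m − (−1)^{m−1}(m−1)!·ch_m is a ℚ-linear combination of monomials c_{i_1}⋯c_{i_r} with all i_j ≤ m−1 and i_1 + ⋯ + i_r = m. Then c_m ∈ I_{⌊m/2⌋} for every m ≥ 2. -/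
import Mathlib


theorem chern_class_mem_filtration {R : Type*} [CommRing R] [Algebra ℚ R]
    (I : ℕ → Submodule ℚ R)
    (hmono : ∀ k, 1 ≤ k → I k ≤ I (k + 1))
    (hmul : ∀ k ℓ, 1 ≤ k → 1 ≤ ℓ → ∀ x ∈ I k, ∀ y ∈ I ℓ, x * y ∈ I (k + ℓ))
    (c ch : ℕ → R)
    (hch : ∀ m, 1 ≤ m → ch m ∈ I 1)
    (hc1 : c 1 = ch 1)
    (hdiv : ∀ k, ∀ γ ∈ I k, γ * c 1 ∈ I k)
    (hrel : ∀ m, 2 ≤ m →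
      c m - ((-1 : ℚ) ^ (m - 1) * (m - 1).factorial) • ch m ∈
        Submodule.span ℚ { x : R | ∃ l : List ℕ,
          (∀ i ∈ l, 1 ≤ i ∧ i ≤ m - 1) ∧ l.sum = m ∧ x = (l.map c).prod }) :
    ∀ m, 2 ≤ m → c m ∈ I (m / 2) := by
  have mono : ∀ j k, 1 ≤ j → j ≤ k → I j ≤ I k := by
    intro j k h1 hjk
    induction k, hjk using Nat.le_induction with
    | base => exact le_rfl
    | succ k hk ih => exact ih.trans (hmono k (h1.trans hk))
  have sumdiv : ∀ l : List ℕ, (l.map (· / 2)).sum ≤ l.sum / 2 := by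
    intro l
    induction l with
    | nil => simp
    | cons a l ih => simp only [List.map_cons, List.sum_cons]; omega
  have hc1I : c 1 ∈ I 1 := hc1 ▸ hch 1 le_rfl
  intro m
  induction m using Nat.strong_induction_on with
  | _ m IH =>
    intro hm
    have key : ∀ l : List ℕ, (∀ i ∈ l, 1 ≤ i ∧ i ≤ m - 1) →
        ∀ t, 1 ≤ t → ∀ x ∈ I t,
        x * (l.map c).prod ∈ I (t + (l.map (· / 2)).sum) := by
      intro l
      induction l with
      | nil => intro _ t ht x hx; simpa using hx
      | cons i l' ihl =>
        intro hmem t ht x hx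
        have hi := hmem i (by simp)
        have htail : ∀ j ∈ l', 1 ≤ j ∧ j ≤ m - 1 := fun j hj => hmem j (by simp [hj])
        simp only [List.map_cons, List.prod_cons, List.sum_cons]
        rcases eq_or_lt_of_le hi.1 with h1 | h2
        · have hieq : i = 1 := h1.symm
          subst hieq
          have hx' : x * c 1 ∈ I t := hdiv t x hx
          have := ihl htail t ht (x * c 1) hx'
          have heq : x * (c 1 * (l'.map c).prod) = x * c 1 * (l'.map c).prod := by ring
          rw [heq]
          have hidx : t + (1 / 2 + (l'.map (· / 2)).sum) = t + (l'.map (· / 2)).sum := by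
            omega
          rw [hidx]
          exact this
        · have hilt : i < m := by omega
          have hci : c i ∈ I (i / 2) := IH i hilt (by omega)
          have h12 : 1 ≤ i / 2 := by omega
          have hxi : x * c i ∈ I (t + i / 2) := hmul t (i / 2) ht h12 x hx (c i) hci
          have := ihl htail (t + i / 2) (by omega) (x * c i) hxi
          have heq : x * (c i * (l'.map c).prod) = x * c i * (l'.map c).prod := by ring
          rw [heq]
          have hidx : t + (i / 2 + (l'.map (· / 2)).sum)
              = t + i / 2 + (l'.map (· / 2)).sum := by omega
          rw [hidx]
          exact this
    have hspan : Submodule.span ℚ { x : R | ∃ l : List ℕ,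
        (∀ i ∈ l, 1 ≤ i ∧ i ≤ m - 1) ∧ l.sum = m ∧ x = (l.map c).prod } ≤ I (m / 2) := by
      rw [Submodule.span_le]
      rintro x ⟨l, hl, hsum, rfl⟩
      have hm2 : 1 ≤ m / 2 := by omega
      by_cases hall : ∀ i ∈ l, i = 1
      · -- all entries equal 1
        obtain _ | ⟨i, l'⟩ := l
        · simp at hsum; omega
        · have hi1 : i = 1 := hall i (by simp)
          subst hi1
          have htail : ∀ j ∈ l', 1 ≤ j ∧ j ≤ m - 1 := fun j hj => hl j (by simp [hj])
          have hs0 : (l'.map (· / 2)).sum = 0 := by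
            rw [List.sum_eq_zero]
            intro x hx
            simp only [List.mem_map] at hx
            obtain ⟨j, hj, rfl⟩ := hx
            have := hall j (by simp [hj])
            omega
          have := key l' htail 1 le_rfl (c 1) hc1I
          rw [hs0] at this
          simp only [List.map_cons, List.prod_cons]
          exact mono 1 (m / 2) le_rfl hm2 this
      · push_neg at hall
        obtain ⟨i, hil, hne⟩ := hall
        have hi2 : 2 ≤ i := by have := hl i hil; omega
        have hp : l.Perm (i :: l.erase i) := List.perm_cons_erase hil
        have hprod : (l.map c).prod = c i * ((l.erase i).map c).prod := by
          rw [(hp.map c).prod_eq]; simp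
        have hsum2 : (l.map (· / 2)).sum = i / 2 + ((l.erase i).map (· / 2)).sum := by
          rw [(hp.map (· / 2)).sum_eq]; simp
        have hilt : i < m := by have := hl i hil; omega
        have hci : c i ∈ I (i / 2) := IH i hilt hi2
        have herase : ∀ j ∈ l.erase i, 1 ≤ j ∧ j ≤ m - 1 :=
          fun j hj => hl j (List.mem_of_mem_erase hj)
        have := key (l.erase i) herase (i / 2) (by omega) (c i) hci
        rw [hprod]
        have hle : i / 2 + ((l.erase i).map (· / 2)).sum ≤ m / 2 := by
          have := sumdiv l
          rw [hsum2] at this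
          omega
        exact mono _ _ (by omega) hle this
    have hsub := hspan (hrel m hm)
    have hchm : ((-1 : ℚ) ^ (m - 1) * (m - 1).factorial) • ch m ∈ I (m / 2) :=
      Submodule.smul_mem _ _ (mono 1 (m / 2) le_rfl (by omega) (hch m (by omega)))
    have : c m = (c m - ((-1 : ℚ) ^ (m - 1) * (m - 1).factorial) • ch m)
        + ((-1 : ℚ) ^ (m - 1) * (m - 1).factorial) • ch m := by ring
    rw [this]
    exact Submodule.add_mem _ hsub hchm
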